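/- Define N(θ) = M(θ) + β(θ)v(θ) where β(θ) = ½∫_θ^{θ+π} α(s)[u,u'](s) ds. Then N'(θ) = β(θ)v'(θ); in particular the v-equidistants η_d = N + dv are constant v-width curves with v-curvature radius β + d, and the v-evolute of each η_d is M. -/

import Mathlib

open Real

/-- Determinant of two plane vectors. -/
noncomputable def det2 (w₁ w₂ : ℝ × ℝ) : ℝ := w₁.1 * w₂.2 - w₁.2 * w₂.1

/-- β(θ) = ½∫_θ^{θ+π} α(s)[u,u'](s) ds. -/
noncomputable def betaOf (u u' : ℝ → ℝ × ℝ) (α : ℝ → ℝ) (θ : ℝ) : ℝ :=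
  (1/2 : ℝ) * ∫ s in θ..(θ + Real.pi), α s * det2 (u s) (u' s)

/-- With N = M + βv one has N' = βv'; the v-equidistants η_d = N + dv are
constant v-width curves with v-curvature radius β + d, and the v-evolute of
each η_d is M. -/
theorem involute_properties (u u' v v' M : ℝ → ℝ × ℝ) (α : ℝ → ℝ)
    (hu : ∀ θ, HasDerivAt u (u' θ) θ)
    (hdet : ∀ θ, 0 < det2 (u θ) (u' θ))
    (husym : ∀ θ, u (θ + π) = -u θ)
    (hv : ∀ θ, v θ = (det2 (u θ) (u' θ))⁻¹ • u' θ)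
    (hv' : ∀ θ, HasDerivAt v (v' θ) θ)
    (hM : ∀ θ, HasDerivAt M (α θ • u' θ) θ)
    (hMper : ∀ θ, M (θ + π) = M θ)
    (hαsym : ∀ θ, α (θ + π) = -α θ)
    (hcontα : Continuous α)
    (hcontu : Continuous u)
    (hcontu' : Continuous u') :
    (∀ θ, HasDerivAt (fun s => M s + betaOf u u' α s • v s)
        (betaOf u u' α θ • v' θ) θ) ∧
    (∀ d : ℝ, ∀ θ, HasDerivAt (fun s => M s + betaOf u u' α s • v s + d • v s)
        ((betaOf u u' α θ + d) • v' θ) θ) ∧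
    (∀ d : ℝ, ∀ θ,
      (M θ + betaOf u u' α θ • v θ + d • v θ)
        - (M (θ + π) + betaOf u u' α (θ + π) • v (θ + π) + d • v (θ + π))
        = (2 * d) • v θ) ∧
    (∀ d : ℝ, ∀ θ,
      (M θ + betaOf u u' α θ • v θ + d • v θ) - (betaOf u u' α θ + d) • v θ
        = M θ) := by
  set f : ℝ → ℝ := fun s => α s * det2 (u s) (u' s) with hfdef
  have hcontf : Continuous f := by
    simp only [hfdef]; unfold det2; fun_prop
  -- u' is antisymmetric
  have hu'sym : ∀ θ, u' (θ + π) = -u' θ := by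
    intro θ
    have h1 : HasDerivAt (fun s => u (s + π)) (u' (θ + π)) θ :=
      (hu (θ + π)).comp_add_const θ π
    have h2 : HasDerivAt (fun s => u (s + π)) (-u' θ) θ :=
      ((hu θ).neg).congr_of_eventuallyEq (Filter.Eventually.of_forall fun s => husym s)
    exact h1.unique h2
  have hfsym : ∀ s, f (s + π) = -f s := by
    intro s
    simp only [hfdef, hαsym, husym, hu'sym]
    unfold det2
    simp only [Prod.fst_neg, Prod.snd_neg]
    ring
  -- derivative of β
  have hint : ∀ a b : ℝ, IntervalIntegrable f MeasureTheory.volume a b :=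
    fun a b => hcontf.intervalIntegrable a b
  have key : ∀ x : ℝ, betaOf u u' α x
      = (1/2 : ℝ) * ((∫ s in (0:ℝ)..(x + π), f s) - ∫ s in (0:ℝ)..x, f s) := by
    intro x
    unfold betaOf
    rw [← intervalIntegral.integral_add_adjacent_intervals (hint 0 x) (hint x (x + π))]
    ring_nf
    rfl
  have hF : ∀ x : ℝ, HasDerivAt (fun y => ∫ s in (0:ℝ)..y, f s) (f x) x := by
    intro x
    exact intervalIntegral.integral_hasDerivAt_right (hint 0 x)
      hcontf.stronglyMeasurable.stronglyMeasurableAtFilter hcontf.continuousAt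
  have hβ : ∀ θ, HasDerivAt (betaOf u u' α) (-f θ) θ := by
    intro θ
    have h1 : HasDerivAt (fun y => ∫ s in (0:ℝ)..(y + π), f s) (f (θ + π)) θ :=
      (hF (θ + π)).comp_add_const θ π
    have h2 : HasDerivAt (fun x => (1/2 : ℝ) *
        ((∫ s in (0:ℝ)..(x + π), f s) - ∫ s in (0:ℝ)..x, f s))
        ((1/2 : ℝ) * (f (θ + π) - f θ)) θ := ((h1.sub (hF θ)).const_mul _)
    have h3 : (1/2 : ℝ) * (f (θ + π) - f θ) = -f θ := by
      rw [hfsym]; ring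
    rw [h3] at h2
    exact h2.congr_of_eventuallyEq (Filter.Eventually.of_forall key)
  -- β is antisymmetric
  have hβsym : ∀ θ, betaOf u u' α (θ + π) = -betaOf u u' α θ := by
    intro θ
    unfold betaOf
    have : (∫ s in (θ + π)..(θ + π + π), f s) = ∫ s in θ..(θ + π), f (s + π) := by
      rw [intervalIntegral.integral_comp_add_right]
    rw [this]
    simp only [hfsym, intervalIntegral.integral_neg]
    ring
  -- v is antisymmetric
  have hvsym : ∀ θ, v (θ + π) = -v θ := by
    intro θ
    rw [hv, hv θ, husym, hu'sym]
    unfold det2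
    simp only [Prod.fst_neg, Prod.snd_neg, neg_mul, mul_neg, neg_neg, smul_neg]
  -- main derivative computation
  have hN : ∀ θ, HasDerivAt (fun s => M s + betaOf u u' α s • v s)
      (betaOf u u' α θ • v' θ) θ := by
    intro θ
    have h := (hM θ).add (((hβ θ).smul (hv' θ)))
    have hne : det2 (u θ) (u' θ) ≠ 0 := (hdet θ).ne'
    have hfv : -f θ • v θ = -(α θ • u' θ) := by
      have hc : -f θ * (det2 (u θ) (u' θ))⁻¹ = -α θ := by
        simp only [hfdef]
        field_simp
      rw [hv θ, smul_smul, hc, neg_smul]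
    have heq : α θ • u' θ + (betaOf u u' α θ • v' θ + -f θ • v θ)
        = betaOf u u' α θ • v' θ := by
      rw [hfv]; abel
    rwa [heq] at h
  refine ⟨hN, ?_, ?_, ?_⟩
  · intro d θ
    have h := (hN θ).add ((hv' θ).const_smul d)
    have : betaOf u u' α θ • v' θ + d • v' θ = (betaOf u u' α θ + d) • v' θ := by
      rw [add_smul]
    rwa [this] at h
  · intro d θ
    rw [hMper, hβsym, hvsym]
    simp only [smul_neg, neg_smul, neg_neg, two_mul, add_smul]
    abel
  · intro d θ
    rw [add_smul]
    abel
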